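/- Let G be a finite simple graph whose adjacency matrix has minimum eigenvalue λ < 0, and let S be an independent set of G such that every vertex i ∉ S has at least −λ neighbors in S, i.e. |{j ∈ S : {i,j} ∈ E(G)}| ≥ −λ. Then α(G) = |S|. -/

import Mathlib

open Finset Matrix

/-- Rayleigh-type bound: if `lam` is a lower bound for the real spectrum of a
Hermitian real matrix `A`, then `lam * ⟪x,x⟫ ≤ ⟪x, A x⟫`. -/
lemma rayleigh_lower_bound {n : Type*} [Fintype n] [DecidableEq n]
    {A : Matrix n n ℝ} (hA : A.IsHermitian) {lam : ℝ}
    (hlb : ∀ μ ∈ spectrum ℝ A, lam ≤ μ) (x : n → ℝ) :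
    lam * (x ⬝ᵥ x) ≤ x ⬝ᵥ (A *ᵥ x) := by
  have hB : (A - lam • (1 : Matrix n n ℝ)).IsHermitian := by
    unfold Matrix.IsHermitian at hA ⊢
    rw [conjTranspose_sub, hA]
    congr 1
    ext i j
    simp [conjTranspose_apply, Matrix.one_apply, eq_comm]
  have hev : ∀ i, 0 ≤ hB.eigenvalues i := by
    intro i
    have h1 := hB.eigenvalues_mem_spectrum_real i
    have h2 : hB.eigenvalues i + lam ∈ spectrum ℝ A := by
      rw [spectrum.mem_iff] at h1 ⊢
      convert h1 using 2
      rw [Algebra.algebraMap_eq_smul_one, Algebra.algebraMap_eq_smul_one, add_smul]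
      abel
    have := hlb _ h2
    linarith
  have hps := hB.posSemidef_iff_eigenvalues_nonneg.mpr (fun i => hev i)
  have h := hps.dotProduct_mulVec_nonneg x
  have hstar : star x = x := by simp
  rw [hstar, sub_mulVec, dotProduct_sub, smul_mulVec, one_mulVec,
    dotProduct_smul] at h
  simp only [smul_eq_mul] at h
  linarith

lemma card_filter_eq_sum {V : Type*} [Fintype V] [DecidableEq V]
    (G : SimpleGraph V) [DecidableRel G.Adj] (C : Finset V) (i : V) :
    ((C.filter fun j => G.Adj i j).card : ℝ)
      = ∑ j, (if j ∈ C then (1 : ℝ) else 0) * (if G.Adj i j then 1 else 0) := by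
  rw [Finset.card_filter, Nat.cast_sum]
  rw [← Finset.sum_filter_add_sum_filter_not Finset.univ (fun j => j ∈ C)]
  have h1 : (Finset.univ.filter fun j => j ∈ C) = C := by
    ext j; simp
  rw [h1]
  have h2 : ∑ j ∈ Finset.univ.filter (fun j => ¬ j ∈ C),
      (if j ∈ C then (1 : ℝ) else 0) * (if G.Adj i j then 1 else 0) = 0 := by
    apply Finset.sum_eq_zero
    intro j hj
    rw [Finset.mem_filter] at hj
    simp [hj.2]
  rw [h2, add_zero]
  apply Finset.sum_congr rfl
  intro j hj
  simp [hj]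

/-- **A spectral condition determining the independence number** (Theorem 4.1, first
conclusion). Let `G` be a graph with minimum adjacency eigenvalue `lam < 0`, and let `S`
be an independent set such that every vertex `i ∉ S` has at least `−λ` neighbours in `S`.
Then `α(G) = |S|`. -/
theorem independence_number_eq_of_spectral_condition
    {V : Type*} [Fintype V] [Nonempty V] [DecidableEq V]
    (G : SimpleGraph V) [DecidableRel G.Adj]
    (lam : ℝ) (hlam : IsLeast (spectrum ℝ (G.adjMatrix ℝ)) lam) (hneg : lam < 0)
    (S : Finset V)
    (hSindep : ∀ u ∈ S, ∀ v ∈ S, ¬ G.Adj u v)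
    (hcond : ∀ i ∉ S, -lam ≤ ((S.filter fun j => G.Adj i j).card : ℝ))
    (α : ℕ)
    (hα : IsGreatest {c : ℕ | ∃ T : Finset V,
      (∀ u ∈ T, ∀ v ∈ T, ¬ G.Adj u v) ∧ T.card = c} α) :
    α = S.card := by
  obtain ⟨⟨T, hTind, hTcard⟩, hub⟩ := hα
  have hSle : S.card ≤ α := hub ⟨S, hSindep, rfl⟩
  -- it suffices to show T.card ≤ S.card
  have hH : (G.adjMatrix ℝ).IsHermitian := by
    unfold Matrix.IsHermitian
    ext i j
    simp [conjTranspose_apply, G.adj_comm]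
  set A : Finset V := T \ S with hA
  set B : Finset V := S \ T with hB
  -- the test vector
  set x : V → ℝ := fun v => (if v ∈ A then (1:ℝ) else 0) - (if v ∈ B then 1 else 0)
    with hx
  have hdisj : ∀ v, v ∈ A → v ∉ B := by
    intro v hv hv'
    rw [hA, Finset.mem_sdiff] at hv
    rw [hB, Finset.mem_sdiff] at hv'
    exact hv.2 hv'.1
  -- norm of x
  have hnorm : x ⬝ᵥ x = (A.card : ℝ) + B.card := by
    rw [dotProduct]
    have : ∀ v, x v * x v = (if v ∈ A then (1:ℝ) else 0) + (if v ∈ B then 1 else 0) := by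
      intro v
      by_cases h1 : v ∈ A
      · have := hdisj v h1
        simp [hx, h1, this]
      · by_cases h2 : v ∈ B <;> simp [hx, h1, h2]
    simp only [this]
    rw [Finset.sum_add_distrib, Finset.sum_boole, Finset.sum_boole]
    simp
  -- quadratic form of x
  have inner_sum : ∀ i, (∑ j, (if G.Adj i j then (1:ℝ) else 0) * x j)
      = ((A.filter fun j => G.Adj i j).card : ℝ)
        - ((B.filter fun j => G.Adj i j).card : ℝ) := by
    intro i
    rw [card_filter_eq_sum G A i, card_filter_eq_sum G B i, ← Finset.sum_sub_distrib]
    apply Finset.sum_congr rfl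
    intro j _
    simp only [hx]
    ring
  have filterA : ∀ i ∈ A, ((A.filter fun j => G.Adj i j).card : ℝ) = 0 := by
    intro i hi
    rw [hA, Finset.mem_sdiff] at hi
    norm_cast
    rw [Finset.card_eq_zero, Finset.filter_eq_empty_iff]
    intro j hj
    rw [hA, Finset.mem_sdiff] at hj
    exact hTind i hi.1 j hj.1
  have filterB : ∀ i ∈ B, ((B.filter fun j => G.Adj i j).card : ℝ) = 0 := by
    intro i hi
    rw [hB, Finset.mem_sdiff] at hi
    norm_cast
    rw [Finset.card_eq_zero, Finset.filter_eq_empty_iff]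
    intro j hj
    rw [hB, Finset.mem_sdiff] at hj
    exact hSindep i hi.1 j hj.1
  set m : ℝ := ∑ i ∈ A, ((B.filter fun j => G.Adj i j).card : ℝ) with hm
  have hsymm : (∑ i ∈ B, ((A.filter fun j => G.Adj i j).card : ℝ)) = m := by
    rw [hm]
    simp only [Finset.card_filter, Nat.cast_sum]
    rw [Finset.sum_comm]
    apply Finset.sum_congr rfl
    intro i _
    apply Finset.sum_congr rfl
    intro j _
    simp [G.adj_comm]
  have hquad : x ⬝ᵥ (G.adjMatrix ℝ *ᵥ x) = -2 * m := by
    have expand : x ⬝ᵥ (G.adjMatrix ℝ *ᵥ x)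
        = ∑ i, x i * (∑ j, (if G.Adj i j then (1:ℝ) else 0) * x j) := by
      simp [dotProduct, Matrix.mulVec, SimpleGraph.adjMatrix_apply]
    rw [expand]
    simp only [inner_sum]
    have split : ∑ i, x i * (((A.filter fun j => G.Adj i j).card : ℝ)
          - ((B.filter fun j => G.Adj i j).card : ℝ))
        = (∑ i ∈ A, (((A.filter fun j => G.Adj i j).card : ℝ)
            - ((B.filter fun j => G.Adj i j).card : ℝ)))
          - ∑ i ∈ B, (((A.filter fun j => G.Adj i j).card : ℝ)
            - ((B.filter fun j => G.Adj i j).card : ℝ)) := by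
      rw [← Finset.sum_filter_add_sum_filter_not Finset.univ (fun i => i ∈ A ∪ B)]
      have hz : ∑ i ∈ Finset.univ.filter (fun i => ¬ i ∈ A ∪ B),
          x i * (((A.filter fun j => G.Adj i j).card : ℝ)
            - ((B.filter fun j => G.Adj i j).card : ℝ)) = 0 := by
        apply Finset.sum_eq_zero
        intro i hi
        rw [Finset.mem_filter, Finset.mem_union] at hi
        push_neg at hi
        simp [hx, hi.2.1, hi.2.2]
      rw [hz, add_zero]
      have hU : (Finset.univ.filter fun i => i ∈ A ∪ B) = A ∪ B := by
        ext i; simp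
      rw [hU, Finset.sum_union]
      · congr 1
        · apply Finset.sum_congr rfl
          intro i hi
          simp [hx, hi, hdisj i hi]
        · rw [← Finset.sum_neg_distrib]
          apply Finset.sum_congr rfl
          intro i hi
          have hiA : i ∉ A := fun h => hdisj i h hi
          simp [hx, hi, hiA]
      · rw [Finset.disjoint_left]
        exact hdisj
    rw [split]
    rw [Finset.sum_sub_distrib, Finset.sum_sub_distrib]
    rw [Finset.sum_congr rfl filterA, Finset.sum_congr rfl filterB, hsymm]
    simp [hm]
    ring
  -- lower bound on m
  have hmlb : (-lam) * A.card ≤ m := by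
    rw [hm]
    calc (-lam) * A.card = ∑ _i ∈ A, (-lam) := by
          rw [Finset.sum_const, nsmul_eq_mul]; ring
      _ ≤ ∑ i ∈ A, ((B.filter fun j => G.Adj i j).card : ℝ) := by
          apply Finset.sum_le_sum
          intro i hi
          have hiT : i ∈ T := (Finset.mem_sdiff.mp hi).1
          have hiS : i ∉ S := (Finset.mem_sdiff.mp hi).2
          have : (S.filter fun j => G.Adj i j) = (B.filter fun j => G.Adj i j) := by
            ext j
            simp only [Finset.mem_filter, hB, Finset.mem_sdiff]
            constructor
            · rintro ⟨hjS, hadj⟩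
              refine ⟨⟨hjS, fun hjT => ?_⟩, hadj⟩
              exact hTind i hiT j hjT hadj
            · rintro ⟨⟨hjS, _⟩, hadj⟩
              exact ⟨hjS, hadj⟩
          have := hcond i hiS
          rw [‹(S.filter fun j => G.Adj i j) = _›] at this
          exact this
  -- Rayleigh quotient
  have hray := rayleigh_lower_bound hH (fun μ hμ => hlam.2 hμ) x
  rw [hnorm, hquad] at hray
  -- conclude |A| ≤ |B|
  have hAB : A.card ≤ B.card := by
    by_contra hcon
    push_neg at hcon
    have : (B.card : ℝ) < A.card := by exact_mod_cast hcon
    nlinarith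
  have hTS : T.card ≤ S.card := by
    have h1 : A.card + (T ∩ S).card = T.card := by
      rw [hA]; exact Finset.card_sdiff_add_card_inter T S
    have h2 : B.card + (T ∩ S).card = S.card := by
      rw [hB, Finset.inter_comm T S]; exact Finset.card_sdiff_add_card_inter S T
    omega
  omega
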